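/- Let G be a second countable locally compact group, let μ be a Borel measure on G which is finite on compact subsets, and let π be a strongly continuous unitary representation of G on a complex Hilbert space H. Then the following are equivalent: (i) there exists C > 0 such that for all unit vectors ξ, η ∈ H one has ∫_G |⟨π(g)ξ, η⟩|² dμ(g) ≤ C; (ii) for all vectors ξ, η ∈ H one has ∫_G |⟨π(g)ξ, η⟩|² dμ(g) < ∞. -/

import Mathlib

open MeasureTheory Filter Topology

set_option linter.unusedSectionVars false

set_option linter.unusedSectionVars false

section Aux

variable {G : Type*} [Group G] [TopologicalSpace G] [IsTopologicalGroup G]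
    [MeasurableSpace G] [BorelSpace G]
    (μ : Measure G)
    {H : Type*} [NormedAddCommGroup H] [InnerProductSpace ℂ H]
    (π : G →* (H ≃ₗᵢ[ℂ] H))

noncomputable def Fint (ξ η : H) : ENNReal :=
  ∫⁻ g, ENNReal.ofReal (‖(inner ℂ ((π g) ξ) η : ℂ)‖ ^ 2) ∂μ

variable (hπcont : ∀ ξ : H, Continuous fun g : G => π g ξ)

include hπcont in
lemma meas_aux (ξ η : H) :
    Measurable fun g => ENNReal.ofReal (‖(inner ℂ ((π g) ξ) η : ℂ)‖ ^ 2) := by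
  have h : Continuous fun g : G => (inner ℂ ((π g) ξ) η : ℂ) :=
    (hπcont ξ).inner continuous_const
  exact (ENNReal.continuous_ofReal.comp ((h.norm).pow 2)).measurable

include hπcont in
lemma scale_left (c : ℂ) (ξ η : H) :
    Fint μ π (c • ξ) η = ENNReal.ofReal (‖c‖ ^ 2) * Fint μ π ξ η := by
  unfold Fint
  rw [← lintegral_const_mul _ (meas_aux π hπcont ξ η)]
  congr 1; ext g
  rw [_root_.map_smul, inner_smul_left, norm_mul, RCLike.norm_conj, mul_pow,
    ENNReal.ofReal_mul (by positivity)]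

include hπcont in
lemma scale_right (c : ℂ) (ξ η : H) :
    Fint μ π ξ (c • η) = ENNReal.ofReal (‖c‖ ^ 2) * Fint μ π ξ η := by
  unfold Fint
  rw [← lintegral_const_mul _ (meas_aux π hπcont ξ η)]
  congr 1; ext g
  rw [inner_smul_right, norm_mul, mul_pow, ENNReal.ofReal_mul (by positivity)]

lemma ofReal_sq_sub_le (x y : ℂ) :
    ENNReal.ofReal (‖x - y‖ ^ 2) ≤
      2 * (ENNReal.ofReal (‖x‖ ^ 2) + ENNReal.ofReal (‖y‖ ^ 2)) := by
  have h : ‖x - y‖ ^ 2 ≤ 2 * (‖x‖ ^ 2 + ‖y‖ ^ 2) := by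
    nlinarith [norm_sub_le x y, norm_nonneg x, norm_nonneg y, sq_nonneg (‖x‖ - ‖y‖),
      norm_nonneg (x - y)]
  calc ENNReal.ofReal (‖x - y‖ ^ 2) ≤ ENNReal.ofReal (2 * (‖x‖ ^ 2 + ‖y‖ ^ 2)) :=
        ENNReal.ofReal_le_ofReal h
    _ = 2 * (ENNReal.ofReal (‖x‖ ^ 2) + ENNReal.ofReal (‖y‖ ^ 2)) := by
        rw [ENNReal.ofReal_mul (by norm_num), ENNReal.ofReal_add (by positivity) (by positivity),
          ENNReal.ofReal_ofNat]

include hπcont in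
lemma sub_le_left (a b η : H) :
    Fint μ π (a - b) η ≤ 2 * (Fint μ π a η + Fint μ π b η) := by
  unfold Fint
  calc (∫⁻ g, ENNReal.ofReal (‖(inner ℂ ((π g) (a - b)) η : ℂ)‖ ^ 2) ∂μ)
      ≤ ∫⁻ g, 2 * (ENNReal.ofReal (‖(inner ℂ ((π g) a) η : ℂ)‖ ^ 2)
          + ENNReal.ofReal (‖(inner ℂ ((π g) b) η : ℂ)‖ ^ 2)) ∂μ := by
        refine lintegral_mono fun g => ?_
        rw [_root_.map_sub, inner_sub_left]
        exact ofReal_sq_sub_le _ _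
    _ = 2 * ((∫⁻ g, ENNReal.ofReal (‖(inner ℂ ((π g) a) η : ℂ)‖ ^ 2) ∂μ)
          + ∫⁻ g, ENNReal.ofReal (‖(inner ℂ ((π g) b) η : ℂ)‖ ^ 2) ∂μ) := by
        rw [lintegral_const_mul (f := fun g => ENNReal.ofReal (‖inner ℂ ((π g) a) η‖ ^ 2) + ENNReal.ofReal (‖inner ℂ ((π g) b) η‖ ^ 2)) _ ((meas_aux π hπcont a η).add (meas_aux π hπcont b η)),
          lintegral_add_left (meas_aux π hπcont a η)]

include hπcont in
lemma sub_le_right (ξ a b : H) :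
    Fint μ π ξ (a - b) ≤ 2 * (Fint μ π ξ a + Fint μ π ξ b) := by
  unfold Fint
  calc (∫⁻ g, ENNReal.ofReal (‖(inner ℂ ((π g) ξ) (a - b) : ℂ)‖ ^ 2) ∂μ)
      ≤ ∫⁻ g, 2 * (ENNReal.ofReal (‖(inner ℂ ((π g) ξ) a : ℂ)‖ ^ 2)
          + ENNReal.ofReal (‖(inner ℂ ((π g) ξ) b : ℂ)‖ ^ 2)) ∂μ := by
        refine lintegral_mono fun g => ?_
        rw [inner_sub_right]
        exact ofReal_sq_sub_le _ _
    _ = 2 * ((∫⁻ g, ENNReal.ofReal (‖(inner ℂ ((π g) ξ) a : ℂ)‖ ^ 2) ∂μ)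
          + ∫⁻ g, ENNReal.ofReal (‖(inner ℂ ((π g) ξ) b : ℂ)‖ ^ 2) ∂μ) := by
        rw [lintegral_const_mul (f := fun g => ENNReal.ofReal (‖inner ℂ ((π g) ξ) a‖ ^ 2) + ENNReal.ofReal (‖inner ℂ ((π g) ξ) b‖ ^ 2)) _ ((meas_aux π hπcont ξ a).add (meas_aux π hπcont ξ b)),
          lintegral_add_left (meas_aux π hπcont ξ a)]

include hπcont in
lemma closed_left (η : H) (c : ENNReal) : IsClosed {ξ : H | Fint μ π ξ η ≤ c} := by
  refine IsSeqClosed.isClosed ?_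
  intro xs x hxs hx
  have hcont : ∀ g : G, Continuous fun ξ : H =>
      ENNReal.ofReal (‖(inner ℂ ((π g) ξ) η : ℂ)‖ ^ 2) := fun g =>
    ENNReal.continuous_ofReal.comp
      ((((π g).continuous.inner continuous_const).norm).pow 2)
  have hpt : ∀ g : G, Tendsto (fun n => ENNReal.ofReal (‖(inner ℂ ((π g) (xs n)) η : ℂ)‖ ^ 2))
      atTop (𝓝 (ENNReal.ofReal (‖(inner ℂ ((π g) x) η : ℂ)‖ ^ 2))) := fun g =>
    ((hcont g).tendsto x).comp hx
  calc Fint μ π x η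
      = ∫⁻ g, liminf (fun n => ENNReal.ofReal (‖(inner ℂ ((π g) (xs n)) η : ℂ)‖ ^ 2)) atTop ∂μ := by
        unfold Fint; congr 1; ext g; exact ((hpt g).liminf_eq).symm
    _ ≤ liminf (fun n => Fint μ π (xs n) η) atTop :=
        lintegral_liminf_le fun n => meas_aux π hπcont (xs n) η
    _ ≤ c := by
        refine liminf_le_of_le (by isBoundedDefault) ?_
        intro b hb
        obtain ⟨n, hn⟩ := hb.exists
        exact hn.trans (hxs n)

include hπcont in
lemma closed_right (ξ : H) (c : ENNReal) : IsClosed {η : H | Fint μ π ξ η ≤ c} := by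
  refine IsSeqClosed.isClosed ?_
  intro xs x hxs hx
  have hcont : ∀ g : G, Continuous fun η : H =>
      ENNReal.ofReal (‖(inner ℂ ((π g) ξ) η : ℂ)‖ ^ 2) := fun g =>
    ENNReal.continuous_ofReal.comp
      (((continuous_const.inner continuous_id).norm).pow 2)
  have hpt : ∀ g : G, Tendsto (fun n => ENNReal.ofReal (‖(inner ℂ ((π g) ξ) (xs n) : ℂ)‖ ^ 2))
      atTop (𝓝 (ENNReal.ofReal (‖(inner ℂ ((π g) ξ) x : ℂ)‖ ^ 2))) := fun g =>
    ((hcont g).tendsto x).comp hx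
  calc Fint μ π ξ x
      = ∫⁻ g, liminf (fun n => ENNReal.ofReal (‖(inner ℂ ((π g) ξ) (xs n) : ℂ)‖ ^ 2)) atTop ∂μ := by
        unfold Fint; congr 1; ext g; exact ((hpt g).liminf_eq).symm
    _ ≤ liminf (fun n => Fint μ π ξ (xs n)) atTop :=
        lintegral_liminf_le fun n => meas_aux π hπcont ξ (xs n)
    _ ≤ c := by
        refine liminf_le_of_le (by isBoundedDefault) ?_
        intro b hb
        obtain ⟨n, hn⟩ := hb.exists
        exact hn.trans (hxs n)

end Aux


/-- Let `G` be a second countable locally compact group, `μ` a Borel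
measure on `G` which is finite on compact subsets, and `π` a strongly continuous unitary
representation of `G` on a complex Hilbert space `H`. Then the following are equivalent:
(i) there is `C > 0` such that `∫_G |⟨π(g)ξ, η⟩|² dμ(g) ≤ C` for all unit vectors `ξ, η`;
(ii) `∫_G |⟨π(g)ξ, η⟩|² dμ(g) < ∞` for all vectors `ξ, η`. -/
theorem stmt0
    {G : Type*} [Group G] [TopologicalSpace G] [IsTopologicalGroup G]
    [LocallyCompactSpace G] [SecondCountableTopology G]
    [MeasurableSpace G] [BorelSpace G]
    (μ : Measure G) [IsFiniteMeasureOnCompacts μ]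
    {H : Type*} [NormedAddCommGroup H] [InnerProductSpace ℂ H] [CompleteSpace H]
    (π : G →* (H ≃ₗᵢ[ℂ] H))
    (hπcont : ∀ ξ : H, Continuous fun g : G => π g ξ) :
    (∃ C > 0, ∀ ξ η : H, ‖ξ‖ = 1 → ‖η‖ = 1 →
        ∫⁻ g, ENNReal.ofReal (‖(inner ℂ ((π g) ξ) η : ℂ)‖ ^ 2) ∂μ ≤ ENNReal.ofReal C)
      ↔
    (∀ ξ η : H, ∫⁻ g, ENNReal.ofReal (‖(inner ℂ ((π g) ξ) η : ℂ)‖ ^ 2) ∂μ < ⊤) := by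
  have hnr : ∀ r : ℝ, 0 ≤ r → ‖((r : ℝ) : ℂ)‖ = r := by
    intro r hr
    rw [Complex.norm_real, Real.norm_eq_abs, abs_of_nonneg hr]
  constructor
  · rintro ⟨C, hC, hb⟩ ξ η
    show Fint μ π ξ η < ⊤
    by_cases hξ : ξ = 0
    · have h0 : Fint μ π (0 : H) η = 0 := by
        have := scale_left μ π hπcont 0 0 η
        simpa using this
      subst hξ; rw [h0]; exact ENNReal.zero_lt_top
    by_cases hη : η = 0
    · have h0 : Fint μ π ξ (0 : H) = 0 := by
        have := scale_right μ π hπcont 0 ξ 0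
        simpa using this
      subst hη; rw [h0]; exact ENNReal.zero_lt_top
    · have hnξ : (0:ℝ) < ‖ξ‖ := norm_pos_iff.2 hξ
      have hnη : (0:ℝ) < ‖η‖ := norm_pos_iff.2 hη
      set ξ' : H := ((‖ξ‖⁻¹ : ℝ) : ℂ) • ξ with hξ'def
      set η' : H := ((‖η‖⁻¹ : ℝ) : ℂ) • η with hη'def
      have hξ'1 : ‖ξ'‖ = 1 := by
        rw [hξ'def, norm_smul, hnr _ (inv_nonneg.2 hnξ.le), inv_mul_cancel₀ hnξ.ne']
      have hη'1 : ‖η'‖ = 1 := by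
        rw [hη'def, norm_smul, hnr _ (inv_nonneg.2 hnη.le), inv_mul_cancel₀ hnη.ne']
      have hexpξ : ξ = ((‖ξ‖ : ℝ) : ℂ) • ξ' := by
        rw [hξ'def, smul_smul, ← Complex.ofReal_mul, mul_inv_cancel₀ hnξ.ne']
        simp
      have hexpη : η = ((‖η‖ : ℝ) : ℂ) • η' := by
        rw [hη'def, smul_smul, ← Complex.ofReal_mul, mul_inv_cancel₀ hnη.ne']
        simp
      calc Fint μ π ξ η = ENNReal.ofReal (‖ξ‖ ^ 2) * (ENNReal.ofReal (‖η‖ ^ 2) *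
            Fint μ π ξ' η') := by
            conv_lhs => rw [hexpξ, hexpη]
            rw [scale_left μ π hπcont, scale_right μ π hπcont,
              hnr _ hnξ.le, hnr _ hnη.le]
        _ ≤ ENNReal.ofReal (‖ξ‖ ^ 2) * (ENNReal.ofReal (‖η‖ ^ 2) * ENNReal.ofReal C) := by
            gcongr
            exact hb ξ' η' hξ'1 hη'1
        _ < ⊤ := by
            exact ENNReal.mul_lt_top ENNReal.ofReal_lt_top
              (ENNReal.mul_lt_top ENNReal.ofReal_lt_top ENNReal.ofReal_lt_top)
  · intro hfin
    have stepA : ∀ η : H, ∃ m : ℕ, ∀ ξ : H, ‖ξ‖ = 1 → Fint μ π ξ η ≤ m := by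
      intro η
      have hcover : (⋃ n : ℕ, {ξ : H | Fint μ π ξ η ≤ n}) = Set.univ := by
        ext ξ
        simp only [Set.mem_iUnion, Set.mem_setOf_eq, Set.mem_univ, iff_true]
        obtain ⟨n, hn⟩ := ENNReal.exists_nat_gt (hfin ξ η).ne
        exact ⟨n, hn.le⟩
      obtain ⟨n, ξ₀, hξ₀⟩ := nonempty_interior_of_iUnion_of_closed
        (fun n : ℕ => closed_left μ π hπcont η (n : ENNReal)) hcover
      obtain ⟨r, hr, hball⟩ := Metric.isOpen_iff.1 isOpen_interior ξ₀ hξ₀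
      have hsub : Metric.ball ξ₀ r ⊆ {ξ : H | Fint μ π ξ η ≤ n} :=
        hball.trans interior_subset
      have key : ∀ ξ : H, ‖ξ‖ = 1 →
          Fint μ π ξ η ≤ ENNReal.ofReal ((2 / r) ^ 2) * (2 * ((n : ENNReal) + n)) := by
        intro ξ hξ1
        have h1 : ξ₀ + ((r / 2 : ℝ) : ℂ) • ξ ∈ Metric.ball ξ₀ r := by
          rw [Metric.mem_ball, dist_eq_norm, add_sub_cancel_left, norm_smul,
            hnr _ (by linarith), hξ1, mul_one]
          linarith
        have h0 : ξ₀ ∈ Metric.ball ξ₀ r := Metric.mem_ball_self hr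
        have h2 : Fint μ π (((r / 2 : ℝ) : ℂ) • ξ) η ≤ 2 * ((n : ENNReal) + n) := by
          have hs := sub_le_left μ π hπcont (ξ₀ + ((r / 2 : ℝ) : ℂ) • ξ) ξ₀ η
          rw [add_sub_cancel_left] at hs
          exact hs.trans (by gcongr <;> [exact hsub h1; exact hsub h0])
        have hexp : ξ = ((2 / r : ℝ) : ℂ) • (((r / 2 : ℝ) : ℂ) • ξ) := by
          rw [smul_smul, ← Complex.ofReal_mul]
          have : (2 / r) * (r / 2) = 1 := by field_simp
          rw [this]; simp
        calc Fint μ π ξ η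
            = ENNReal.ofReal ((2 / r) ^ 2) * Fint μ π (((r / 2 : ℝ) : ℂ) • ξ) η := by
              conv_lhs => rw [hexp]
              rw [scale_left μ π hπcont, hnr _ (by positivity)]
          _ ≤ ENNReal.ofReal ((2 / r) ^ 2) * (2 * ((n : ENNReal) + n)) := by gcongr
      have hB : ENNReal.ofReal ((2 / r) ^ 2) * (2 * ((n : ENNReal) + n)) ≠ ⊤ := by
        finiteness
      obtain ⟨m, hm⟩ := ENNReal.exists_nat_gt hB
      exact ⟨m, fun ξ h => (key ξ h).trans hm.le⟩
    have hcover : (⋃ m : ℕ, {η : H | ∀ ξ : H, ‖ξ‖ = 1 → Fint μ π ξ η ≤ m}) = Set.univ := by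
      ext η
      simp only [Set.mem_iUnion, Set.mem_setOf_eq, Set.mem_univ, iff_true]
      exact stepA η
    have hclosed : ∀ m : ℕ, IsClosed {η : H | ∀ ξ : H, ‖ξ‖ = 1 → Fint μ π ξ η ≤ m} := by
      intro m
      have : {η : H | ∀ ξ : H, ‖ξ‖ = 1 → Fint μ π ξ η ≤ m} =
          ⋂ ξ : H, ⋂ _ : ‖ξ‖ = 1, {η : H | Fint μ π ξ η ≤ m} := by
        ext η; simp [Set.mem_iInter]
      rw [this]
      exact isClosed_iInter fun ξ => isClosed_iInter fun _ =>
        closed_right μ π hπcont ξ (m : ENNReal)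
    obtain ⟨m, η₀, hη₀⟩ := nonempty_interior_of_iUnion_of_closed hclosed hcover
    obtain ⟨r, hr, hball⟩ := Metric.isOpen_iff.1 isOpen_interior η₀ hη₀
    have hsub : Metric.ball η₀ r ⊆ {η : H | ∀ ξ : H, ‖ξ‖ = 1 → Fint μ π ξ η ≤ m} :=
      hball.trans interior_subset
    refine ⟨(2 / r) ^ 2 * (2 * ((m : ℝ) + m)) + 1, by positivity, fun ξ η hξ1 hη1 => ?_⟩
    show Fint μ π ξ η ≤ _
    have h1 : η₀ + ((r / 2 : ℝ) : ℂ) • η ∈ Metric.ball η₀ r := by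
      rw [Metric.mem_ball, dist_eq_norm, add_sub_cancel_left, norm_smul,
        hnr _ (by linarith), hη1, mul_one]
      linarith
    have h0 : η₀ ∈ Metric.ball η₀ r := Metric.mem_ball_self hr
    have h2 : Fint μ π ξ (((r / 2 : ℝ) : ℂ) • η) ≤ 2 * ((m : ENNReal) + m) := by
      have hs := sub_le_right μ π hπcont ξ (η₀ + ((r / 2 : ℝ) : ℂ) • η) η₀
      rw [add_sub_cancel_left] at hs
      exact hs.trans (by gcongr <;> [exact hsub h1 ξ hξ1; exact hsub h0 ξ hξ1])
    have hexp : η = ((2 / r : ℝ) : ℂ) • (((r / 2 : ℝ) : ℂ) • η) := by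
      rw [smul_smul, ← Complex.ofReal_mul]
      have : (2 / r) * (r / 2) = 1 := by field_simp
      rw [this]; simp
    calc Fint μ π ξ η
        = ENNReal.ofReal ((2 / r) ^ 2) * Fint μ π ξ (((r / 2 : ℝ) : ℂ) • η) := by
          conv_lhs => rw [hexp]
          rw [scale_right μ π hπcont, hnr _ (by positivity)]
      _ ≤ ENNReal.ofReal ((2 / r) ^ 2) * (2 * ((m : ENNReal) + m)) := by gcongr
      _ = ENNReal.ofReal ((2 / r) ^ 2 * (2 * ((m : ℝ) + m))) := by
          rw [ENNReal.ofReal_mul (by positivity)]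
          congr 1
          rw [show (2 * ((m : ℝ) + m)) = ((2 * (m + m) : ℕ) : ℝ) by push_cast; ring,
            ENNReal.ofReal_natCast]
          push_cast
          ring
      _ ≤ ENNReal.ofReal ((2 / r) ^ 2 * (2 * ((m : ℝ) + m)) + 1) := by
          apply ENNReal.ofReal_le_ofReal
          linarith
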